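/- Assume in addition that B separates the points of X (for all x ≠ y in X there is f ∈ B with f(x) ≠ f(y), so that ι is injective), that B is separable with respect to the supremum norm (so that Δ is second countable), and that ι(X) is a Borel subset of Δ. Then for every finite measure μ ∈ D(B), the map ι is measurable from (X, σ(B)) to the Borel σ-algebra of Δ, and the pushforward measure ι_*μ, defined by (ι_*μ)(A) = μ(ι⁻¹(A)) for Borel A ⊂ Δ, coincides with μ̂; in particular μ̂(Δ ∖ ι(X)) = 0, i.e. ι(X) has full μ̂-measure in Δ. -/

import Mathlib

open MeasureTheory Filter Topology BoundedContinuousFunction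
open scoped ZeroAtInfty ENNReal

/-- The complexification of a bounded real-valued function: we regard a bounded real
function on `X` as a bounded complex function. (`X` carries the discrete topology, so
`X →ᵇ ℝ` is exactly the space of bounded real-valued functions on `X`.) -/
noncomputable def cplx {X : Type*} [TopologicalSpace X] (f : X →ᵇ ℝ) : X →ᵇ ℂ :=
  BoundedContinuousFunction.comp Complex.ofReal Complex.isometry_ofReal.lipschitz f

/-- `A(B)`: the closure, in the supremum norm, of the complexification `B + iB` of a
set `B` of bounded real-valued functions, inside the C*-algebra of all bounded
complex-valued functions on `X`. -/
noncomputable def AofB {X : Type*} [TopologicalSpace X] (B : Set (X →ᵇ ℝ)) : Set (X →ᵇ ℂ) :=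
  closure {a : X →ᵇ ℂ | ∃ f ∈ B, ∃ g ∈ B, a = cplx f + Complex.I • cplx g}

@[simp] lemma cplx_apply {X : Type*} [TopologicalSpace X] (f : X →ᵇ ℝ) (x : X) :
    cplx f x = (f x : ℂ) := rfl

/-- Helper: a continuous compactly supported real function, as a `C₀` complex function. -/
noncomputable def realC0 {Δ : Type*} [TopologicalSpace Δ] (g : C(Δ, ℝ))
    (hg : HasCompactSupport g) : C₀(Δ, ℂ) where
  toFun := fun φ => (g φ : ℂ)
  continuous_toFun := Complex.continuous_ofReal.comp g.continuous
  zero_at_infty' := by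
    have h1 : Tendsto g (cocompact Δ) (𝓝 0) := hg.is_zero_at_infty
    have := (Complex.continuous_ofReal.tendsto 0).comp h1
    exact this

@[simp] lemma realC0_apply {Δ : Type*} [TopologicalSpace Δ] (g : C(Δ, ℝ))
    (hg : HasCompactSupport g) (φ : Δ) : realC0 g hg φ = (g φ : ℂ) := rfl

lemma C0_norm_apply_le {Δ : Type*} [TopologicalSpace Δ] (h : C₀(Δ, ℂ)) (φ : Δ) :
    ‖h φ‖ ≤ ‖h‖ := by
  rw [← ZeroAtInftyContinuousMap.norm_toBCF_eq_norm]
  exact h.toBCF.norm_coe_le_norm φ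

/-- Assume in addition that `B` separates the points of `X` (so that
`ι` is injective), that `B` is separable in the supremum norm (so that `Δ` is second
countable) and that `ι(X)` is a Borel subset of `Δ`.  Then for every finite measure
`μ ∈ D(B)` with transferred Radon measure `ν = μ̂`: the map `ι` is measurable from
`(X, σ(B))` to the Borel σ-algebra of `Δ`, the pushforward `ι_*μ` coincides with `μ̂`,
and in particular `μ̂(Δ ∖ ι(X)) = 0`, i.e. `ι(X)` has full `μ̂`-measure in `Δ`. -/
theorem pushforward_eq_transferred_measure {X : Type*} [Nonempty X] [TopologicalSpace X] [DiscreteTopology X]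
    (B : Set (X →ᵇ ℝ))
    (hBadd : ∀ f ∈ B, ∀ g ∈ B, f + g ∈ B)
    (hBsmul : ∀ (c : ℝ), ∀ f ∈ B, c • f ∈ B)
    (hBmax : ∀ f ∈ B, ∀ g ∈ B, ∃ h ∈ B, ∀ x, h x = max (f x) (g x))
    (hBmin : ∀ f ∈ B, ∀ g ∈ B, ∃ h ∈ B, ∀ x, h x = min (f x) (g x))
    (hBmul : ∀ f ∈ B, ∀ g ∈ B, f * g ∈ B)
    (hBstone : ∀ f ∈ B, ∃ h ∈ B, ∀ x, h x = min (f x) 1)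
    (hBnv : ∀ x : X, ∃ f ∈ B, f x ≠ 0)
    (hBsep : ∀ x y : X, x ≠ y → ∃ f ∈ B, f x ≠ f y)
    (hBseparable : TopologicalSpace.IsSeparable B)
    {Δ : Type*} [TopologicalSpace Δ] [LocallyCompactSpace Δ] [T2Space Δ]
    [SecondCountableTopology Δ] [MeasurableSpace Δ] [BorelSpace Δ]
    (ι : X → Δ) (hι : DenseRange ι) (hinj : Function.Injective ι)
    (G : (X →ᵇ ℂ) → C₀(Δ, ℂ))
    (hGeval : ∀ a ∈ AofB B, ∀ x : X, G a (ι x) = a x)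
    (hGsurj : ∀ h : C₀(Δ, ℂ), ∃ a ∈ AofB B, G a = h)
    (hBorel : MeasurableSet (Set.range ι))
    {mX : MeasurableSpace X}
    (hmX : mX = ⨆ f ∈ B, MeasurableSpace.comap (⇑f : X → ℝ) inferInstance)
    (μ : Measure X) [IsFiniteMeasure μ] (hμ : ∀ f ∈ B, Integrable (⇑f) μ)
    (ν : Measure Δ) (hνreg : ν.Regular)
    (hν : ∀ f ∈ B, Integrable (fun φ => ((G (cplx f)) φ).re) ν ∧
      ∫ x, f x ∂μ = ∫ φ, ((G (cplx f)) φ).re ∂ν) :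
    Measurable ι ∧ μ.map ι = ν ∧ ν (Set.range ι)ᶜ = 0 := by
  obtain ⟨x₀⟩ := ‹Nonempty X›
  obtain ⟨f₀, hf₀, -⟩ := hBnv x₀
  have hB0 : (0 : X →ᵇ ℝ) ∈ B := by simpa using hBsmul 0 f₀ hf₀
  have hcplx0 : cplx (0 : X →ᵇ ℝ) = 0 := by
    ext x; simp
  have hmemS : ∀ f ∈ B, ∀ g ∈ B, cplx f + Complex.I • cplx g ∈ AofB B :=
    fun f hf g hg => subset_closure ⟨f, hf, g, hg, rfl⟩
  have hmemA : ∀ f ∈ B, cplx f ∈ AofB B := by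
    intro f hf
    have := hmemS f hf 0 hB0
    simpa [hcplx0] using this
  have hdense : Dense (Set.range ι) := hι
  -- measurability of elements of B
  have hfmeas : ∀ f ∈ B, Measurable (⇑f : X → ℝ) := by
    intro f hf
    rw [measurable_iff_comap_le, hmX]
    exact le_iSup₂ (f := fun (g : X →ᵇ ℝ) (_ : g ∈ B) =>
      MeasurableSpace.comap (⇑g : X → ℝ) inferInstance) f hf
  -- measurability of elements of A(B)
  have haMeas : ∀ a ∈ AofB B, Measurable (fun x => a x : X → ℂ) := by
    intro a ha
    have hseq : ∀ n : ℕ, ∃ b ∈ {a : X →ᵇ ℂ | ∃ f ∈ B, ∃ g ∈ B, a = cplx f + Complex.I • cplx g},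
        dist a b < 1 / (n + 1) := fun n => Metric.mem_closure_iff.mp ha _ (by positivity)
    choose u huS hu using hseq
    have hptwise : ∀ x, Tendsto (fun n => u n x) atTop (𝓝 (a x)) := by
      intro x
      rw [tendsto_iff_dist_tendsto_zero]
      refine squeeze_zero (g := fun n : ℕ => 1 / ((n : ℝ) + 1)) (fun n => dist_nonneg)
        (fun n => ?_) tendsto_one_div_add_atTop_nhds_zero_nat
      calc dist (u n x) (a x) ≤ dist (u n) a := BoundedContinuousFunction.dist_coe_le_dist x
        _ = dist a (u n) := dist_comm _ _
        _ ≤ 1 / ((n : ℝ) + 1) := (hu n).le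
    refine measurable_of_tendsto_metrizable (fun n => ?_) (tendsto_pi_nhds.mpr hptwise)
    obtain ⟨f, hf, g, hg, hfg⟩ := huS n
    have hm : Measurable (fun x => (f x : ℂ) + Complex.I * (g x : ℂ)) :=
      (Complex.measurable_ofReal.comp (hfmeas f hf)).add
        ((Complex.measurable_ofReal.comp (hfmeas g hg)).const_mul Complex.I)
    have heq : ∀ x, u n x = (f x : ℂ) + Complex.I * (g x : ℂ) := by
      intro x; rw [hfg]; simp
    rw [show ⇑(u n) = fun x => (f x : ℂ) + Complex.I * (g x : ℂ) from funext heq]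
    exact hm
  -- pointwise Lipschitz bound for G via density
  have hGlip : ∀ a ∈ AofB B, ∀ b ∈ AofB B, ∀ φ, ‖G a φ - G b φ‖ ≤ dist a b := by
    intro a ha b hb
    have hclosed : IsClosed {φ : Δ | ‖G a φ - G b φ‖ ≤ dist a b} :=
      isClosed_le (((map_continuous (G a)).sub (map_continuous (G b))).norm) continuous_const
    have hsub : Set.range ι ⊆ {φ : Δ | ‖G a φ - G b φ‖ ≤ dist a b} := by
      rintro _ ⟨x, rfl⟩
      simp only [Set.mem_setOf_eq, hGeval a ha x, hGeval b hb x]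
      calc ‖a x - b x‖ = ‖(a - b) x‖ := by simp
        _ ≤ ‖a - b‖ := BoundedContinuousFunction.norm_coe_le_norm _ x
        _ = dist a b := (dist_eq_norm a b).symm
    have hall := hclosed.closure_subset_iff.mpr hsub
    rw [hι.closure_range] at hall
    exact fun φ => hall (Set.mem_univ φ)
  -- G of a complexified real function is real-valued
  have hGim : ∀ f ∈ B, ∀ φ, (G (cplx f) φ).im = 0 := by
    intro f hf
    have key : (fun φ => (G (cplx f) φ).im) = fun _ => (0 : ℝ) := by
      refine Continuous.ext_on hdense
        (Complex.continuous_im.comp (map_continuous (G (cplx f)))) continuous_const ?_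
      rintro _ ⟨x, rfl⟩
      show (G (cplx f) (ι x)).im = 0
      rw [hGeval _ (hmemA f hf) x]
      simp
    exact fun φ => congrFun key φ
  -- additivity on the generating set
  have hGre : ∀ f ∈ B, ∀ g ∈ B, ∀ φ,
      G (cplx f + Complex.I • cplx g) φ = G (cplx f) φ + Complex.I * G (cplx g) φ := by
    intro f hf g hg
    have key : (fun φ => G (cplx f + Complex.I • cplx g) φ)
        = fun φ => G (cplx f) φ + Complex.I * G (cplx g) φ := by
      refine Continuous.ext_on hdense (map_continuous _)
        ((map_continuous (G (cplx f))).add (continuous_const.mul (map_continuous (G (cplx g))))) ?_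
      rintro _ ⟨x, rfl⟩
      show G (cplx f + Complex.I • cplx g) (ι x) = G (cplx f) (ι x) + Complex.I * G (cplx g) (ι x)
      rw [hGeval _ (hmemS f hf g hg) x, hGeval _ (hmemA f hf) x, hGeval _ (hmemA g hg) x]
      simp
    exact fun φ => congrFun key φ
  -- evaluation on the range
  have hFeval : ∀ f ∈ B, ∀ x, (G (cplx f) (ι x)).re = f x := by
    intro f hf x
    rw [hGeval _ (hmemA f hf) x]
    simp
  -- approximation of C₀ functions by elements of B
  have happrox : ∀ (h : C₀(Δ, ℂ)), ∀ ε : ℝ, 0 < ε →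
      ∃ f ∈ B, ∀ φ, |(G (cplx f) φ).re - (h φ).re| ≤ ε := by
    intro h ε hε
    obtain ⟨a, ha, rfl⟩ := hGsurj h
    obtain ⟨b, hbS, hb⟩ := Metric.mem_closure_iff.mp ha ε hε
    obtain ⟨f, hf, g, hg, rfl⟩ := hbS
    refine ⟨f, hf, fun φ => ?_⟩
    have h2 : (G (cplx f) φ).re = (G (cplx f + Complex.I • cplx g) φ).re := by
      rw [hGre f hf g hg φ]
      simp [Complex.add_re, Complex.mul_re, hGim g hg φ]
    rw [h2]
    calc |(G (cplx f + Complex.I • cplx g) φ).re - (G a φ).re|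
        = |(G (cplx f + Complex.I • cplx g) φ - G a φ).re| := by rw [Complex.sub_re]
      _ ≤ ‖G (cplx f + Complex.I • cplx g) φ - G a φ‖ := Complex.abs_re_le_norm _
      _ ≤ dist (cplx f + Complex.I • cplx g) a := hGlip _ (hmemS f hf g hg) _ ha φ
      _ ≤ ε := by rw [dist_comm] at hb; exact hb.le
  -- measurability of ι
  have hιmeas : Measurable ι := by
    apply measurable_of_isOpen
    intro U hU
    have hdisj : ∀ φ : U, Disjoint ({(φ : Δ)} : Set Δ) Uᶜ := by
      intro φ
      rw [Set.disjoint_singleton_left]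
      simpa using φ.2
    choose g hg1 hg0 hgc hg01 using fun φ : U =>
      exists_continuous_one_zero_of_isCompact (isCompact_singleton (x := (φ : Δ)))
        hU.isClosed_compl (hdisj φ)
    set V : U → Set Δ := fun φ => g φ ⁻¹' Set.Ioi 0 with hV
    have hVopen : ∀ φ, IsOpen (V φ) := fun φ => isOpen_Ioi.preimage (g φ).continuous
    obtain ⟨T, hTc, hTU⟩ := TopologicalSpace.isOpen_iUnion_countable V hVopen
    have hUeq : U = ⋃ φ ∈ T, V φ := by
      rw [hTU]
      apply subset_antisymm
      · intro ψ hψ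
        refine Set.mem_iUnion.mpr ⟨⟨ψ, hψ⟩, ?_⟩
        have : g ⟨ψ, hψ⟩ ψ = 1 := hg1 ⟨ψ, hψ⟩ rfl
        simp [hV, this]
      · intro ψ hψ
        obtain ⟨φ, hφ⟩ := Set.mem_iUnion.mp hψ
        by_contra hn
        have h0 : g φ ψ = 0 := hg0 φ hn
        have : (0 : ℝ) < g φ ψ := hφ
        rw [h0] at this
        exact lt_irrefl 0 this
    rw [hUeq, Set.preimage_iUnion₂]
    apply MeasurableSet.biUnion hTc
    intro φ _
    obtain ⟨a, haA, hGa⟩ := hGsurj (realC0 (g φ) (hgc φ))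
    have hkey : ∀ x, g φ (ι x) = (a x).re := by
      intro x
      have h1 := hGeval a haA x
      rw [hGa] at h1
      have : ((g φ (ι x) : ℝ) : ℂ) = a x := h1
      rw [← this]
      simp
    have heq : ι ⁻¹' V φ = (fun x => (a x).re) ⁻¹' Set.Ioi 0 := by
      ext x; simp [hV, hkey x]
    rw [heq]
    exact (Complex.measurable_re.comp (haMeas a haA)) measurableSet_Ioi
  -- absolute values inside B and their Gelfand transforms
  have habs : ∀ f ∈ B, ∃ f' ∈ B, (∀ x, f' x = |f x|) ∧
      (∀ φ, (G (cplx f') φ).re = ‖G (cplx f) φ‖) := by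
    intro f hf
    obtain ⟨f', hf', hmax⟩ := hBmax f hf ((-1 : ℝ) • f) (hBsmul (-1) f hf)
    have habs1 : ∀ x, f' x = |f x| := by
      intro x
      rw [hmax x, abs_eq_max_neg]
      congr 1
      simp
    refine ⟨f', hf', habs1, ?_⟩
    have hx : (fun φ => G (cplx f') φ) = fun φ => ((‖G (cplx f) φ‖ : ℝ) : ℂ) := by
      refine Continuous.ext_on hdense (map_continuous _)
        (Complex.continuous_ofReal.comp (continuous_norm.comp (map_continuous _))) ?_
      rintro _ ⟨x, rfl⟩
      show G (cplx f') (ι x) = ((‖G (cplx f) (ι x)‖ : ℝ) : ℂ)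
      rw [hGeval _ (hmemA f' hf') x, hGeval _ (hmemA f hf) x]
      simp [habs1 x, Complex.norm_real]
    intro φ
    have := congrFun hx φ
    rw [this]
    simp
  -- bound on the measure of compact sets
  have hν_compact : ∀ K : Set Δ, IsCompact K →
      ν K ≤ ENNReal.ofReal (2 * (μ Set.univ).toReal) := by
    intro K hK
    obtain ⟨g, hg1, -, hgc, hg01⟩ :=
      exists_continuous_one_zero_of_isCompact hK isClosed_empty (Set.disjoint_empty K)
    obtain ⟨f, hf, hfap⟩ := happrox (realC0 g hgc) (1/4) (by norm_num)
    have hfap' : ∀ φ, |(G (cplx f) φ).re - g φ| ≤ 1/4 := by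
      intro φ; simpa using hfap φ
    obtain ⟨f', hf', hf'x, hf'φ⟩ := habs f hf
    have h34 : ∀ φ ∈ K, (3 : ℝ)/4 ≤ (G (cplx f') φ).re := by
      intro φ hφ
      rw [hf'φ φ]
      have h1 := hfap' φ
      have h2 : g φ = 1 := hg1 hφ
      rw [h2] at h1
      have h3 : (3 : ℝ)/4 ≤ (G (cplx f) φ).re := by
        have := abs_le.mp h1
        linarith [this.1]
      exact h3.trans ((Complex.abs_re_le_norm _).trans' (le_abs_self _))
    have hnn : ∀ φ, 0 ≤ (G (cplx f') φ).re := by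
      intro φ; rw [hf'φ φ]; exact norm_nonneg _
    have hintf' : Integrable (fun φ => (G (cplx f') φ).re) ν := (hν f' hf').1
    have step1 : ν K ≤ ∫⁻ φ, ENNReal.ofReal ((4/3) * (G (cplx f') φ).re) ∂ν := by
      rw [← lintegral_indicator_one hK.measurableSet]
      refine lintegral_mono fun φ => ?_
      by_cases hφ : φ ∈ K
      · simp only [Set.indicator_of_mem hφ, Pi.one_apply]
        have := h34 φ hφ
        rw [show (1 : ℝ≥0∞) = ENNReal.ofReal 1 by simp]
        exact ENNReal.ofReal_le_ofReal (by linarith)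
      · rw [Set.indicator_of_notMem hφ]
        exact zero_le
    have step2 : ∫⁻ φ, ENNReal.ofReal ((4/3) * (G (cplx f') φ).re) ∂ν
        = ENNReal.ofReal (∫ φ, (4/3) * (G (cplx f') φ).re ∂ν) := by
      rw [ofReal_integral_eq_lintegral_ofReal (hintf'.const_mul _)]
      filter_upwards with φ
      have := hnn φ
      positivity
    have step3 : ∫ φ, (4/3 : ℝ) * (G (cplx f') φ).re ∂ν ≤ 2 * (μ Set.univ).toReal := by
      rw [integral_const_mul, ← (hν f' hf').2]
      have hbound : ∀ᵐ x ∂μ, ‖f' x‖ ≤ 5/4 := by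
        filter_upwards with x
        rw [Real.norm_eq_abs, hf'x x, abs_abs]
        have h1 := hfap' (ι x)
        rw [hFeval f hf x] at h1
        have h2 := hg01 (ι x)
        rw [abs_le] at h1
        rw [abs_le]
        constructor <;> nlinarith [h2.1, h2.2, h1.1, h1.2]
      have hnorm := norm_integral_le_of_norm_le_const (μ := μ) hbound
      rw [Real.norm_eq_abs, measureReal_def] at hnorm
      nlinarith [ENNReal.toReal_nonneg (a := μ Set.univ), le_abs_self (∫ x, f' x ∂μ)]
    calc ν K ≤ _ := step1
      _ = _ := step2
      _ ≤ _ := ENNReal.ofReal_le_ofReal step3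
  -- ν is a finite measure
  haveI hνfin : IsFiniteMeasure ν := by
    constructor
    have hle : ν Set.univ ≤ ENNReal.ofReal (2 * (μ Set.univ).toReal) := by
      by_contra hlt
      push_neg at hlt
      obtain ⟨K, -, hKc, hKgt⟩ := hνreg.innerRegular isOpen_univ _ hlt
      exact absurd (hν_compact K hKc) (not_le.mpr hKgt)
    exact lt_of_le_of_lt hle ENNReal.ofReal_lt_top
  -- the integral identity for C₀ functions
  have hC0int : ∀ h : C₀(Δ, ℂ), ∫ x, (h (ι x)).re ∂μ = ∫ φ, (h φ).re ∂ν := by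
    intro h
    have hmint : Integrable (fun x => (h (ι x)).re) μ := by
      refine ⟨(Complex.measurable_re.comp
        ((map_continuous h).measurable.comp hιmeas)).aestronglyMeasurable, ?_⟩
      refine HasFiniteIntegral.of_bounded (C := ‖h‖) ?_
      filter_upwards with x
      exact (Complex.abs_re_le_norm _).trans (C0_norm_apply_le h (ι x))
    have hνint : Integrable (fun φ => (h φ).re) ν := by
      refine ⟨(Complex.continuous_re.comp (map_continuous h)).aestronglyMeasurable, ?_⟩
      refine HasFiniteIntegral.of_bounded (C := ‖h‖) ?_
      filter_upwards with φ
      exact (Complex.abs_re_le_norm _).trans (C0_norm_apply_le h φ)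
    have key : ∀ ε : ℝ, 0 < ε → |∫ x, (h (ι x)).re ∂μ - ∫ φ, (h φ).re ∂ν|
        ≤ ε * ((μ Set.univ).toReal + (ν Set.univ).toReal) := by
      intro ε hε
      obtain ⟨f, hf, hfap⟩ := happrox h ε hε
      have e1 : |∫ x, (h (ι x)).re ∂μ - ∫ x, f x ∂μ| ≤ ε * (μ Set.univ).toReal := by
        rw [← integral_sub hmint (hμ f hf)]
        have := norm_integral_le_of_norm_le_const (μ := μ)
          (f := fun x => (h (ι x)).re - f x) (C := ε) ?_
        · simpa [Measure.real] using this
        · filter_upwards with x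
          have h1 := hfap (ι x)
          rw [hFeval f hf x] at h1
          rw [Real.norm_eq_abs, abs_sub_comm]
          exact h1
      have e2 : |∫ φ, (h φ).re ∂ν - ∫ φ, (G (cplx f) φ).re ∂ν| ≤ ε * (ν Set.univ).toReal := by
        rw [← integral_sub hνint (hν f hf).1]
        have := norm_integral_le_of_norm_le_const (μ := ν)
          (f := fun φ => (h φ).re - (G (cplx f) φ).re) (C := ε) ?_
        · simpa [Measure.real] using this
        · filter_upwards with φ
          rw [Real.norm_eq_abs, abs_sub_comm]
          exact hfap φ
      have e3 : ∫ x, f x ∂μ = ∫ φ, (G (cplx f) φ).re ∂ν := (hν f hf).2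
      calc |∫ x, (h (ι x)).re ∂μ - ∫ φ, (h φ).re ∂ν|
          = |(∫ x, (h (ι x)).re ∂μ - ∫ x, f x ∂μ)
            + (∫ φ, (G (cplx f) φ).re ∂ν - ∫ φ, (h φ).re ∂ν)| := by rw [e3]; ring_nf
        _ ≤ |∫ x, (h (ι x)).re ∂μ - ∫ x, f x ∂μ|
            + |∫ φ, (G (cplx f) φ).re ∂ν - ∫ φ, (h φ).re ∂ν| := abs_add_le _ _
        _ ≤ ε * (μ Set.univ).toReal + ε * (ν Set.univ).toReal := by
            rw [abs_sub_comm (∫ φ, (G (cplx f) φ).re ∂ν)]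
            exact add_le_add e1 e2
        _ = ε * ((μ Set.univ).toReal + (ν Set.univ).toReal) := by ring
    set C := (μ Set.univ).toReal + (ν Set.univ).toReal with hC
    have hCnn : 0 ≤ C := add_nonneg ENNReal.toReal_nonneg ENNReal.toReal_nonneg
    have habs0 : |∫ x, (h (ι x)).re ∂μ - ∫ φ, (h φ).re ∂ν| ≤ 0 := by
      refine le_of_forall_pos_le_add fun δ hδ => ?_
      rcases eq_or_lt_of_le hCnn with hC0 | hC0
      · have := key 1 one_pos
        rw [← hC0] at this
        simpa using this.trans (by linarith)
      · have := key (δ / (2 * C)) (by positivity)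
        rw [zero_add]
        calc |∫ x, (h (ι x)).re ∂μ - ∫ φ, (h φ).re ∂ν| ≤ (δ / (2 * C)) * C := this
          _ = δ / 2 := by field_simp
          _ ≤ δ := by linarith
    exact sub_eq_zero.mp (abs_nonpos_iff.mp habs0)
  -- the pushforward measure
  haveI : IsFiniteMeasure (μ.map ι) := Measure.isFiniteMeasure_map μ ι
  -- lintegral identity for nonnegative bounded continuous functions
  have hCb : ∀ f : Δ →ᵇ NNReal, ∫⁻ φ, f φ ∂(μ.map ι) = ∫⁻ φ, f φ ∂ν := by
    intro f
    set K := CompactExhaustion.choice Δ with hKdef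
    have hdisj : ∀ n : ℕ, Disjoint (K n) (∅ : Set Δ) := fun n => Set.disjoint_empty _
    choose χ hχ1 hχ0 hχc hχ01 using fun n : ℕ =>
      exists_continuous_one_zero_of_isCompact (K.isCompact n) isClosed_empty (hdisj n)
    set gn : ℕ → Δ → ℝ := fun n φ => (f φ : ℝ) * χ n φ with hgn
    have hgnc : ∀ n, Continuous (gn n) :=
      fun n => (NNReal.continuous_coe.comp (map_continuous f)).mul (χ n).continuous
    have hgns : ∀ n, HasCompactSupport (gn n) := fun n => (hχc n).mul_left
    have hptw : ∀ φ, Tendsto (fun n => gn n φ) atTop (𝓝 (f φ : ℝ)) := by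
      intro φ
      obtain ⟨N, hN⟩ := K.exists_mem φ
      refine tendsto_atTop_of_eventually_const (i₀ := N) fun n hn => ?_
      have hmem : φ ∈ K n := K.subset hn hN
      rw [hgn]
      simp only
      rw [hχ1 n hmem]
      simp
    have hCf : ∀ φ, |(f φ : ℝ)| ≤ dist f (0 : Δ →ᵇ NNReal) := by
      intro φ
      have h := BoundedContinuousFunction.dist_coe_le_dist (f := f) (g := 0) φ
      rw [abs_of_nonneg (f φ).coe_nonneg]
      calc (f φ : ℝ) = dist (f φ) ((0 : Δ →ᵇ NNReal) φ) := by
            simp [NNReal.dist_eq]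
        _ ≤ dist f 0 := h
    have hbnd : ∀ n φ, ‖gn n φ‖ ≤ dist f (0 : Δ →ᵇ NNReal) := by
      intro n φ
      rw [hgn]
      simp only [Real.norm_eq_abs, abs_mul]
      have h1 := hCf φ
      have h2 := hχ01 n φ
      have h3 : |χ n φ| ≤ 1 := abs_le.mpr ⟨by linarith [h2.1], h2.2⟩
      calc |(f φ : ℝ)| * |χ n φ| ≤ dist f (0 : Δ →ᵇ NNReal) * 1 :=
            mul_le_mul h1 h3 (abs_nonneg _) dist_nonneg
        _ = dist f (0 : Δ →ᵇ NNReal) := mul_one _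
    have hDCT : ∀ (m : Measure Δ), IsFiniteMeasure m →
        Tendsto (fun n => ∫ φ, gn n φ ∂m) atTop (𝓝 (∫ φ, (f φ : ℝ) ∂m)) := by
      intro m hm
      refine tendsto_integral_of_dominated_convergence (fun _ => dist f (0 : Δ →ᵇ NNReal))
        (fun n => (hgnc n).aestronglyMeasurable) (integrable_const _)
        (fun n => Filter.Eventually.of_forall (hbnd n))
        (Filter.Eventually.of_forall hptw)
    -- each truncated integral transfers
    have hgn_eq : ∀ n, ∫ φ, gn n φ ∂(μ.map ι) = ∫ φ, gn n φ ∂ν := by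
      intro n
      have h0 := hC0int (realC0 ⟨gn n, hgnc n⟩ (hgns n))
      have h1 : ∫ x, gn n (ι x) ∂μ = ∫ φ, gn n φ ∂ν := by simpa using h0
      rw [integral_map hιmeas.aemeasurable ((hgnc n).aestronglyMeasurable)]
      exact h1
    have hlim1 := hDCT (μ.map ι) inferInstance
    have hlim2 := hDCT ν inferInstance
    rw [funext hgn_eq] at hlim1
    have hInt : ∫ φ, (f φ : ℝ) ∂(μ.map ι) = ∫ φ, (f φ : ℝ) ∂ν :=
      tendsto_nhds_unique hlim1 hlim2
    have hint1 : Integrable (fun φ => (f φ : ℝ)) (μ.map ι) := by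
      refine ⟨(NNReal.continuous_coe.comp (map_continuous f)).aestronglyMeasurable, ?_⟩
      refine HasFiniteIntegral.of_bounded (C := dist f (0 : Δ →ᵇ NNReal)) ?_
      filter_upwards with φ
      simpa [Real.norm_eq_abs] using hCf φ
    have hint2 : Integrable (fun φ => (f φ : ℝ)) ν := by
      refine ⟨(NNReal.continuous_coe.comp (map_continuous f)).aestronglyMeasurable, ?_⟩
      refine HasFiniteIntegral.of_bounded (C := dist f (0 : Δ →ᵇ NNReal)) ?_
      filter_upwards with φ
      simpa [Real.norm_eq_abs] using hCf φ
    rw [lintegral_coe_eq_integral _ hint1, lintegral_coe_eq_integral _ hint2, hInt]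
  have hmap : μ.map ι = ν := ext_of_forall_lintegral_eq_of_IsFiniteMeasure hCb
  refine ⟨hιmeas, hmap, ?_⟩
  rw [← hmap, Measure.map_apply hιmeas hBorel.compl]
  have hempty : ι ⁻¹' (Set.range ι)ᶜ = ∅ := by
    ext x; simp
  rw [hempty, measure_empty]
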